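/- For an injective vector x of length n, the sum of squared row sums of the sign matrix equals n(n² − 1)/3: Σ_{k=1}^{n} ( Σ_{l=1}^{n} sgn(x_k − x_l) )² = n(n² − 1)/3. -/
import Mathlib

open Finset

lemma sum_range_cast' (n : ℕ) : ∑ r ∈ range n, (r : ℝ) = n * (n - 1) / 2 := by
  induction n with
  | zero => simp
  | succ m ih => rw [sum_range_succ, ih]; push_cast; ring

lemma sum_range_sq_cast' (n : ℕ) :
    ∑ r ∈ range n, (r : ℝ) ^ 2 = n * (n - 1) * (2 * n - 1) / 6 := by
  induction n with
  | zero => simp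
  | succ m ih => rw [sum_range_succ, ih]; push_cast; ring

lemma key_sum (n : ℕ) :
    ∑ r ∈ range n, (2 * (r : ℝ) - ((n : ℝ) - 1)) ^ 2 = (n : ℝ) * ((n : ℝ) ^ 2 - 1) / 3 := by
  have h : ∀ r ∈ range n, (2 * (r : ℝ) - ((n : ℝ) - 1)) ^ 2 =
      4 * (r : ℝ) ^ 2 - 4 * ((n : ℝ) - 1) * (r : ℝ) + ((n : ℝ) - 1) ^ 2 := by
    intro r _; ring
  rw [Finset.sum_congr rfl h, Finset.sum_add_distrib, Finset.sum_sub_distrib,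
    ← Finset.mul_sum, ← Finset.mul_sum, sum_range_cast' n, sum_range_sq_cast' n,
    Finset.sum_const, card_range, nsmul_eq_mul]
  ring

theorem kemeny_row_sum_squares (n : ℕ) (x : Fin n → ℝ) (hx : Function.Injective x) :
    ∑ k : Fin n, (∑ l : Fin n, Real.sign (x k - x l)) ^ 2 =
      (n : ℝ) * ((n : ℝ) ^ 2 - 1) / 3 := by
  classical
  set f : Fin n → ℕ := fun k => (univ.filter (fun l => x l < x k)).card with hf
  have hinner : ∀ k, ∑ l : Fin n, Real.sign (x k - x l) = 2 * (f k : ℝ) - ((n : ℝ) - 1) := by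
    intro k
    have hterm : ∀ l : Fin n, Real.sign (x k - x l) =
        (if x l < x k then (1 : ℝ) else 0) * 2 - (if l = k then 0 else 1) := by
      intro l
      rcases lt_trichotomy (x l) (x k) with h | h | h
      · rw [Real.sign_of_pos (by linarith)]
        have : l ≠ k := fun e => absurd (e ▸ h) (lt_irrefl _)
        simp only [if_pos h, if_neg this]; norm_num
      · have : l = k := hx h
        simp [this, Real.sign_zero]
      · rw [Real.sign_of_neg (by linarith)]
        have : l ≠ k := fun e => absurd (e ▸ h) (lt_irrefl _)
        simp only [if_neg (not_lt.mpr h.le), if_neg this]; norm_num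
    rw [Finset.sum_congr rfl (fun l _ => hterm l), Finset.sum_sub_distrib]
    have h1 : ∑ l : Fin n, (if x l < x k then (1 : ℝ) else 0) * 2 = (f k : ℝ) * 2 := by
      rw [← Finset.sum_mul, Finset.sum_boole]
    have h2 : ∑ l : Fin n, (if l = k then (0 : ℝ) else 1) = (n : ℝ) - 1 := by
      have he : ∀ l : Fin n, (if l = k then (0:ℝ) else 1) = 1 - (if l = k then 1 else 0) := by
        intro l; split <;> norm_num
      rw [Finset.sum_congr rfl fun l _ => he l, Finset.sum_sub_distrib,
        Finset.sum_const, Finset.sum_ite_eq' univ k (fun _ => (1:ℝ))]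
      simp
    rw [h1, h2]; ring
  have hfinj : Function.Injective f := by
    intro a b hab
    by_contra hne
    have hxne : x a ≠ x b := fun e => hne (hx e)
    wlog hlt : x a < x b generalizing a b
    · exact this hab.symm (Ne.symm hne) hxne.symm (hxne.lt_or_gt.resolve_left hlt)
    have hsub : univ.filter (fun l => x l < x a) ⊆ univ.filter (fun l => x l < x b) := by
      intro l hl
      simp only [mem_filter, mem_univ, true_and] at hl ⊢
      linarith
    have hmem : a ∈ univ.filter (fun l => x l < x b) := by simp [hlt]
    have hnmem : a ∉ univ.filter (fun l => x l < x a) := by simp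
    have : f a < f b :=
      Finset.card_lt_card (Finset.ssubset_iff_subset_ne.mpr
        ⟨hsub, fun e => hnmem (by rw [e]; exact hmem)⟩)
    omega
  have hflt : ∀ k, f k < n := by
    intro k
    have : univ.filter (fun l => x l < x k) ⊂ univ := by
      refine Finset.ssubset_univ_iff.mpr ?_
      intro h
      have : k ∈ univ.filter (fun l => x l < x k) := by rw [h]; exact mem_univ k
      simp at this
    simpa using Finset.card_lt_card this
  have himg : Finset.image f univ = range n := by
    apply Finset.eq_of_subset_of_card_le
    · intro r hr
      simp only [mem_image] at hr
      obtain ⟨k, _, rfl⟩ := hr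
      exact mem_range.mpr (hflt k)
    · rw [card_range, Finset.card_image_of_injective _ hfinj, card_univ, Fintype.card_fin]
  calc ∑ k : Fin n, (∑ l : Fin n, Real.sign (x k - x l)) ^ 2
      = ∑ k : Fin n, (2 * (f k : ℝ) - ((n : ℝ) - 1)) ^ 2 := by
        exact Finset.sum_congr rfl fun k _ => by rw [hinner k]
    _ = ∑ r ∈ range n, (2 * (r : ℝ) - ((n : ℝ) - 1)) ^ 2 := by
        rw [← himg, Finset.sum_image (fun a _ b _ h => hfinj h)]
    _ = (n : ℝ) * ((n : ℝ) ^ 2 - 1) / 3 := key_sum n
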